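/- Let G be a (banner, C5)-free graph with an odd antihole A, and let u be a vertex of G that forms a co-triangle together with some two vertices of A. Then u has no neighbor in A. -/

import Mathlib

open SimpleGraph
open scoped Fin.NatCast Fin.CommRing

/-- The banner: a chordless 4-cycle 0-1-2-3-0 together with a fifth vertex 4
adjacent to exactly one vertex (vertex 0) of the cycle. -/
def banner : SimpleGraph (Fin 5) :=
  SimpleGraph.fromRel (fun i j =>
    (i = 0 ∧ j = 1) ∨ (i = 1 ∧ j = 2) ∨ (i = 2 ∧ j = 3) ∨ (i = 3 ∧ j = 0) ∨ (i = 0 ∧ j = 4))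

/-- A graph is banner-free if it has no induced subgraph isomorphic to the banner. -/
def BannerFree {V : Type*} (G : SimpleGraph V) : Prop := ¬ Nonempty (banner ↪g G)

/-- A graph is C5-free if it has no induced subgraph isomorphic to the chordless 5-cycle. -/
def C5Free {V : Type*} (G : SimpleGraph V) : Prop :=
  ¬ Nonempty (SimpleGraph.cycleGraph 5 ↪g G)

/-- A graph is odd-hole-free if it has no induced chordless cycle of odd length `n ≥ 5`
(odd holes are the odd chordless cycles with at least four, hence at least five, vertices). -/
def OddHoleFree {V : Type*} (G : SimpleGraph V) : Prop :=
  ∀ n : ℕ, 5 ≤ n → Odd n → ¬ Nonempty (SimpleGraph.cycleGraph n ↪g G)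

/-- `A` is an odd antihole of `G`: the subgraph induced by `A` is isomorphic to the
complement of a chordless cycle on an odd number `n ≥ 5` of vertices. -/
def IsOddAntihole {V : Type*} (G : SimpleGraph V) (A : Set V) : Prop :=
  ∃ n : ℕ, 5 ≤ n ∧ Odd n ∧ Nonempty ((SimpleGraph.cycleGraph n)ᶜ ≃g G.induce A)

/-- `H` is a homogeneous set of `G`: `2 ≤ |H| < |V(G)|` and every vertex outside `H`
is adjacent to all vertices of `H` or to none of them. -/
def IsHomogeneous {V : Type*} (G : SimpleGraph V) (H : Set V) : Prop :=
  2 ≤ H.ncard ∧ H ≠ Set.univ ∧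
    ∀ v ∉ H, (∀ h ∈ H, G.Adj v h) ∨ (∀ h ∈ H, ¬ G.Adj v h)

/-- A graph is perfect if every induced subgraph has chromatic number equal to
its clique number. -/
def IsPerfect {V : Type*} (G : SimpleGraph V) : Prop :=
  ∀ S : Set V, (G.induce S).chromaticNumber = ((G.induce S).cliqueNum : ℕ∞)

/-- A graph is perfectly divisible if every induced subgraph `G[S]` contains a set `X`
of vertices meeting all largest cliques of `G[S]` and inducing a perfect graph. -/
def PerfectlyDivisible {V : Type*} (G : SimpleGraph V) : Prop :=
  ∀ S : Set V, ∃ X ⊆ S, IsPerfect (G.induce X) ∧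
    ∀ t : Finset V, ↑t ⊆ S → G.IsNClique ((G.induce S).cliqueNum) t → ∃ x ∈ X, x ∈ t

/-- A graph is `k`-divisible if the vertex set of each of its induced subgraphs `G[S]`
having at least one edge can be partitioned into `k` sets, none of which contains a
clique of size `ω(G[S])`.  (A graph with no edges is trivially `k`-divisible.) -/
def KDivisible {V : Type*} (G : SimpleGraph V) (k : ℕ) : Prop :=
  ∀ S : Set V, (∃ a ∈ S, ∃ b ∈ S, G.Adj a b) →
    ∃ P : Fin k → Set V, (∀ v ∈ S, ∃! i, v ∈ P i) ∧
      ∀ i, P i ⊆ S ∧ ¬ ∃ t : Finset V, ↑t ⊆ P i ∧ G.IsNClique ((G.induce S).cliqueNum) t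

/-- The maximum total weight `α_w(G)` of a stable (independent) set of the weighted
graph `G`; stable sets of `G` are exactly the cliques of the complement of `G`. -/
noncomputable def alphaW {V : Type*} (G : SimpleGraph V) (w : V → ℤ) : ℤ :=
  sSup {x : ℤ | ∃ s : Finset V, Gᶜ.IsClique (↑s : Set V) ∧ x = ∑ v ∈ s, w v}

/-- `C` is a clique cutset of the connected graph `G` if `C` is a clique and
deleting `C` from `G` leaves a disconnected graph. -/
def IsCliqueCutset {V : Type*} (G : SimpleGraph V) (C : Set V) : Prop :=
  G.Connected ∧ G.IsClique C ∧ ¬ (G.induce Cᶜ).Preconnected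

/-- Let `G` be a (banner, C5)-free graph with an odd antihole `A`, and let
`u` be a vertex forming a co-triangle together with two vertices `a, b` of `A`.  Then `u`
has no neighbour in `A`. -/
lemma banner_embed {V : Type*} (G : SimpleGraph V) (v0 v1 v2 v3 v4 : V)
    (a01 : G.Adj v0 v1) (a12 : G.Adj v1 v2) (a23 : G.Adj v2 v3) (a03 : G.Adj v0 v3)
    (a04 : G.Adj v0 v4)
    (n02 : ¬G.Adj v0 v2) (n13 : ¬G.Adj v1 v3) (n14 : ¬G.Adj v1 v4) (n24 : ¬G.Adj v2 v4)
    (n34 : ¬G.Adj v3 v4)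
    (d02 : v0 ≠ v2) (d13 : v1 ≠ v3) (d14 : v1 ≠ v4) (d24 : v2 ≠ v4) (d34 : v3 ≠ v4) :
    Nonempty (banner ↪g G) := by
  have d01 := a01.ne
  have d12 := a12.ne
  have d23 := a23.ne
  have d03 := a03.ne
  have d04 := a04.ne
  have a10 := a01.symm
  have a21 := a12.symm
  have a32 := a23.symm
  have a30 := a03.symm
  have a40 := a04.symm
  have n20 : ¬G.Adj v2 v0 := fun h => n02 h.symm
  have n31 : ¬G.Adj v3 v1 := fun h => n13 h.symm
  have n41 : ¬G.Adj v4 v1 := fun h => n14 h.symm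
  have n42 : ¬G.Adj v4 v2 := fun h => n24 h.symm
  have n43 : ¬G.Adj v4 v3 := fun h => n34 h.symm
  refine ⟨⟨⟨![v0, v1, v2, v3, v4], ?_⟩, ?_⟩⟩
  · intro i j h
    fin_cases i <;> fin_cases j <;> simp_all
  · intro i j
    fin_cases i <;> fin_cases j <;>
      simp [banner, SimpleGraph.fromRel_adj, G.irrefl] <;> assumption


lemma c5_compl_iso : Nonempty ((cycleGraph 5) ≃g (cycleGraph 5)ᶜ) :=
  ⟨⟨⟨fun i => 2*i, fun i => 3*i, by decide, by decide⟩, by decide⟩⟩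

lemma fin_cast_inj {m a b : ℕ} (ha : a < m + 2) (hb : b < m + 2) :
    (a : Fin (m+2)) = (b : Fin (m+2)) ↔ a = b := by
  rw [Fin.ext_iff, Fin.val_cast_of_lt ha, Fin.val_cast_of_lt hb]

lemma fin_sub_one {m a b : ℕ} (ha : a < m + 2) (hb : b < m + 2) :
    (a : Fin (m+2)) - (b : Fin (m+2)) = 1 ↔ (a = b + 1 ∨ (b + 1 = m + 2 ∧ a = 0)) := by
  rw [sub_eq_iff_eq_add]
  have h1 : (1 : Fin (m+2)) + (b : Fin (m+2)) = ((b+1 : ℕ) : Fin (m+2)) := by push_cast; ring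
  rw [h1]
  rcases Nat.lt_or_ge (b+1) (m+2) with h | h
  · rw [fin_cast_inj ha h]; omega
  · have hb1 : b + 1 = m + 2 := by omega
    have h2 : ((b+1 : ℕ) : Fin (m+2)) = ((0:ℕ) : Fin (m+2)) := by rw [hb1]; simp
    rw [h2, fin_cast_inj ha (by omega)]; omega


lemma key_lemma {V : Type*} (G : SimpleGraph V) (hbf : ¬ Nonempty (banner ↪g G))
    {n : ℕ} (hn : 7 ≤ n) (g : ℕ → V)
    (hinj : ∀ i j, i < n → j < n → i ≠ j → g i ≠ g j)
    (hadj : ∀ i j, i < n → j < n →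
      (G.Adj (g i) (g j) ↔
        ¬(i = j ∨ i + 1 = j ∨ j + 1 = i ∨ (i + 1 = n ∧ j = 0) ∨ (j + 1 = n ∧ i = 0))))
    (u : V) (hu0 : u ≠ g 0) (hu1 : u ≠ g 1)
    (f0 : ¬ G.Adj u (g 0)) (f1 : ¬ G.Adj u (g 1))
    (k : ℕ) (hk : k < n) (hfk : G.Adj u (g k)) : False := by
  classical
  have ga : ∀ i j, i < n → j < n →
      ¬(i = j ∨ i + 1 = j ∨ j + 1 = i ∨ (i + 1 = n ∧ j = 0) ∨ (j + 1 = n ∧ i = 0)) →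
      G.Adj (g i) (g j) := fun i j hi hj h => (hadj i j hi hj).2 h
  have gn : ∀ i j, i < n → j < n →
      (i = j ∨ i + 1 = j ∨ j + 1 = i ∨ (i + 1 = n ∧ j = 0) ∨ (j + 1 = n ∧ i = 0)) →
      ¬G.Adj (g i) (g j) := fun i j hi hj h ha => ((hadj i j hi hj).1 ha) h
  -- u is distinct from all antihole vertices
  have hu : ∀ i, i < n → u ≠ g i := by
    intro i hi he
    have hi0 : i ≠ 0 := fun h => hu0 (h ▸ he)
    have hi1 : i ≠ 1 := fun h => hu1 (h ▸ he)
    have c0 : i = 0 ∨ i + 1 = 0 ∨ 0 + 1 = i ∨ (i + 1 = n ∧ (0:ℕ) = 0) ∨ (0 + 1 = n ∧ i = 0) := by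
      by_contra hc
      exact f0 (he ▸ ga i 0 hi (by omega) hc)
    have c1 : i = 1 ∨ i + 1 = 1 ∨ 1 + 1 = i ∨ (i + 1 = n ∧ (1:ℕ) = 0) ∨ (1 + 1 = n ∧ i = 0) := by
      by_contra hc
      exact f1 (he ▸ ga i 1 hi (by omega) hc)
    omega
  -- L1 : middle dominoes carry equal adjacency to u
  have L1 : ∀ p, 3 ≤ p → p + 3 ≤ n → (G.Adj u (g p) ↔ G.Adj u (g (p+1))) := by
    intro p h3 hpn
    constructor
    · intro hp
      by_contra hp1
      exact hbf (banner_embed G (g p) (g 0) (g (p+1)) (g 1) u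
        (ga p 0 (by omega) (by omega) (by omega))
        (ga 0 (p+1) (by omega) (by omega) (by omega))
        (ga (p+1) 1 (by omega) (by omega) (by omega))
        (ga p 1 (by omega) (by omega) (by omega))
        hp.symm
        (gn p (p+1) (by omega) (by omega) (by omega))
        (gn 0 1 (by omega) (by omega) (by omega))
        (fun h => f0 h.symm)
        (fun h => hp1 h.symm)
        (fun h => f1 h.symm)
        (hinj p (p+1) (by omega) (by omega) (by omega))
        (hinj 0 1 (by omega) (by omega) (by omega))
        (Ne.symm (hu 0 (by omega)))
        (Ne.symm (hu (p+1) (by omega)))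
        (Ne.symm (hu 1 (by omega))))
    · intro hp1
      by_contra hp
      exact hbf (banner_embed G (g (p+1)) (g 1) (g p) (g 0) u
        (ga (p+1) 1 (by omega) (by omega) (by omega))
        (ga 1 p (by omega) (by omega) (by omega))
        (ga p 0 (by omega) (by omega) (by omega))
        (ga (p+1) 0 (by omega) (by omega) (by omega))
        hp1.symm
        (gn (p+1) p (by omega) (by omega) (by omega))
        (gn 1 0 (by omega) (by omega) (by omega))
        (fun h => f1 h.symm)
        (fun h => hp h.symm)
        (fun h => f0 h.symm)
        (hinj (p+1) p (by omega) (by omega) (by omega))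
        (hinj 1 0 (by omega) (by omega) (by omega))
        (Ne.symm (hu 1 (by omega)))
        (Ne.symm (hu p (by omega)))
        (Ne.symm (hu 0 (by omega))))
  -- L2 : u adjacent to g 2 only, with middle false
  have L2 : G.Adj u (g 2) → ¬G.Adj u (g 4) → ¬G.Adj u (g 5) → False := by
    intro h2 h4 h5
    exact hbf (banner_embed G (g 2) (g 4) (g 1) (g 5) u
      (ga 2 4 (by omega) (by omega) (by omega))
      (ga 4 1 (by omega) (by omega) (by omega))
      (ga 1 5 (by omega) (by omega) (by omega))
      (ga 2 5 (by omega) (by omega) (by omega))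
      h2.symm
      (gn 2 1 (by omega) (by omega) (by omega))
      (gn 4 5 (by omega) (by omega) (by omega))
      (fun h => h4 h.symm)
      (fun h => f1 h.symm)
      (fun h => h5 h.symm)
      (hinj 2 1 (by omega) (by omega) (by omega))
      (hinj 4 5 (by omega) (by omega) (by omega))
      (Ne.symm (hu 4 (by omega)))
      (Ne.symm (hu 1 (by omega)))
      (Ne.symm (hu 5 (by omega))))
  -- L3 : u adjacent to g (n-1) only, with middle false
  have L3 : G.Adj u (g (n-1)) → ¬G.Adj u (g 3) → ¬G.Adj u (g 4) → False := by
    intro hn1 h3 h4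
    exact hbf (banner_embed G (g (n-1)) (g 3) (g 0) (g 4) u
      (ga (n-1) 3 (by omega) (by omega) (by omega))
      (ga 3 0 (by omega) (by omega) (by omega))
      (ga 0 4 (by omega) (by omega) (by omega))
      (ga (n-1) 4 (by omega) (by omega) (by omega))
      hn1.symm
      (gn (n-1) 0 (by omega) (by omega) (by omega))
      (gn 3 4 (by omega) (by omega) (by omega))
      (fun h => h3 h.symm)
      (fun h => f0 h.symm)
      (fun h => h4 h.symm)
      (hinj (n-1) 0 (by omega) (by omega) (by omega))
      (hinj 3 4 (by omega) (by omega) (by omega))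
      (Ne.symm (hu 3 (by omega)))
      (Ne.symm (hu 0 (by omega)))
      (Ne.symm (hu 4 (by omega))))
  -- L4a : pattern T T F at (n-3, n-2, n-1)
  have L4a : G.Adj u (g (n-3)) → G.Adj u (g (n-2)) → ¬G.Adj u (g (n-1)) → False := by
    intro hn3 hn2 hn1
    exact hbf (banner_embed G (g (n-3)) u (g (n-2)) (g 0) (g (n-1))
      hn3.symm
      hn2
      (ga (n-2) 0 (by omega) (by omega) (by omega))
      (ga (n-3) 0 (by omega) (by omega) (by omega))
      (ga (n-3) (n-1) (by omega) (by omega) (by omega))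
      (gn (n-3) (n-2) (by omega) (by omega) (by omega))
      f0
      hn1
      (gn (n-2) (n-1) (by omega) (by omega) (by omega))
      (gn 0 (n-1) (by omega) (by omega) (by omega))
      (hinj (n-3) (n-2) (by omega) (by omega) (by omega))
      hu0
      (hu (n-1) (by omega))
      (hinj (n-2) (n-1) (by omega) (by omega) (by omega))
      (hinj 0 (n-1) (by omega) (by omega) (by omega)))
  -- L4b : pattern T T at (n-2, n-1)
  have L4b : G.Adj u (g (n-2)) → G.Adj u (g (n-1)) → False := by
    intro hn2 hn1
    exact hbf (banner_embed G (g (n-2)) u (g (n-1)) (g 1) (g 0)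
      hn2.symm
      hn1
      (ga (n-1) 1 (by omega) (by omega) (by omega))
      (ga (n-2) 1 (by omega) (by omega) (by omega))
      (ga (n-2) 0 (by omega) (by omega) (by omega))
      (gn (n-2) (n-1) (by omega) (by omega) (by omega))
      f1
      f0
      (gn (n-1) 0 (by omega) (by omega) (by omega))
      (gn 1 0 (by omega) (by omega) (by omega))
      (hinj (n-2) (n-1) (by omega) (by omega) (by omega))
      hu1
      hu0
      (hinj (n-1) 0 (by omega) (by omega) (by omega))
      (hinj 1 0 (by omega) (by omega) (by omega)))
  -- the middle is constant
  have hmid : ∀ i, 3 ≤ i → i + 2 ≤ n → (G.Adj u (g 3) ↔ G.Adj u (g i)) := by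
    intro i
    induction i with
    | zero => intro h _; omega
    | succ j ih =>
      intro h3 h2
      rcases Nat.lt_or_ge j 3 with hj | hj
      · have hj3 : j + 1 = 3 := by omega
        rw [hj3]
      · exact (ih (by omega) (by omega)).trans (L1 j hj (by omega))
  by_cases h3 : G.Adj u (g 3)
  · have hn2 : G.Adj u (g (n-2)) := (hmid (n-2) (by omega) (by omega)).1 h3
    by_cases hn1 : G.Adj u (g (n-1))
    · exact L4b hn2 hn1
    · have hn3 : G.Adj u (g (n-3)) := (hmid (n-3) (by omega) (by omega)).1 h3
      exact L4a hn3 hn2 hn1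
  · have hmidF : ∀ i, 3 ≤ i → i + 2 ≤ n → ¬G.Adj u (g i) :=
      fun i a b h => h3 ((hmid i a b).2 h)
    have k0 : k ≠ 0 := fun h => f0 (h ▸ hfk)
    have k1 : k ≠ 1 := fun h => f1 (h ▸ hfk)
    rcases Nat.lt_or_ge k 3 with h | h
    · have hk2 : k = 2 := by omega
      exact L2 (hk2 ▸ hfk) (hmidF 4 (by omega) (by omega)) (hmidF 5 (by omega) (by omega))
    · rcases Nat.lt_or_ge k (n-1) with h' | h'
      · exact hmidF k h (by omega) hfk
      · have hk2 : k = n - 1 := by omega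
        exact L3 (hk2 ▸ hfk) (hmidF 3 (by omega) (by omega)) (hmidF 4 (by omega) (by omega))

theorem stmt_16 {V : Type*} [Fintype V] (G : SimpleGraph V)
    (hbf : BannerFree G) (hc5 : C5Free G)
    (A : Set V) (hA : IsOddAntihole G A)
    (u a b : V) (ha : a ∈ A) (hb : b ∈ A) (hab : a ≠ b) (hua : u ≠ a) (hub : u ≠ b)
    (hnua : ¬ G.Adj u a) (hnub : ¬ G.Adj u b) (hnab : ¬ G.Adj a b) :
    ∀ x ∈ A, ¬ G.Adj u x := by
  obtain ⟨n, hn5, hodd, ⟨e⟩⟩ := hA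
  by_cases h5 : n = 5
  · subst h5
    obtain ⟨ι⟩ := c5_compl_iso
    exact ((hc5 ⟨(Embedding.induce A).comp (ι.trans e).toRelEmbedding⟩)).elim
  · have hn7 : 7 ≤ n := by
      rcases hodd with ⟨t, ht⟩; omega
    obtain ⟨m, rfl⟩ : ∃ m, n = m + 2 := ⟨n - 2, by omega⟩
    set N := m + 2 with hN
    clear hN
    have g0inj : ∀ x y : Fin N, ((e x : A) : V) = ((e y : A) : V) → x = y := by
      intro x y h
      exact e.injective (Subtype.ext h)
    have g0adj : ∀ x y : Fin N, G.Adj ((e x : A) : V) ((e y : A) : V) ↔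
        (x ≠ y ∧ ¬(x - y = 1 ∨ y - x = 1)) := by
      intro x y
      have h1 : (G.induce A).Adj (e x) (e y) ↔ ((cycleGraph N)ᶜ).Adj x y := e.map_rel_iff
      have h2 : (G.induce A).Adj (e x) (e y) ↔ G.Adj ((e x : A) : V) ((e y : A) : V) := Iff.rfl
      rw [← h2, h1, compl_adj, cycleGraph_adj]
    obtain ⟨pa, hpa⟩ : ∃ p : Fin N, ((e p : A) : V) = a := ⟨e.symm ⟨a, ha⟩, by simp⟩
    obtain ⟨pb, hpb⟩ : ∃ p : Fin N, ((e p : A) : V) = b := ⟨e.symm ⟨b, hb⟩, by simp⟩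
    have hpab : pa ≠ pb := by
      intro h
      exact hab (by rw [← hpa, ← hpb, h])
    have hcons : pa - pb = 1 ∨ pb - pa = 1 := by
      by_contra hc
      apply hnab
      rw [← hpa, ← hpb]
      exact (g0adj pa pb).2 ⟨hpab, hc⟩
    obtain ⟨τ, τinj, τsurj, τ0, τ1, hd⟩ :
        ∃ τ : Fin N → Fin N, Function.Injective τ ∧ Function.Surjective τ ∧
          τ 0 = pa ∧ τ 1 = pb ∧
          ((∀ x y, τ x - τ y = x - y) ∨ (∀ x y, τ x - τ y = y - x)) := by
      rcases hcons with h | h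
      · have hpb1 : pa - 1 = pb := by
          rw [sub_eq_iff_eq_add] at h ⊢
          rw [h]; ring
        refine ⟨fun x => pa - x, ?_, ?_, by simp, hpb1, Or.inr fun x y => by ring⟩
        · intro x y hxy
          have hxy' : pa - x = pa - y := hxy
          have h2 : pa - (pa - x) = pa - (pa - y) := by rw [hxy']
          simpa [sub_sub_cancel] using h2
        · intro z
          exact ⟨pa - z, sub_sub_cancel _ _⟩
      · have hpb1 : pa + 1 = pb := by
          rw [sub_eq_iff_eq_add] at h
          rw [h]; ring
        refine ⟨fun x => pa + x, ?_, ?_, by simp, hpb1, Or.inl fun x y => by ring⟩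
        · intro x y hxy
          exact add_left_cancel hxy
        · intro z
          exact ⟨z - pa, by ring⟩
    have hinj : ∀ i j : ℕ, i < N → j < N → i ≠ j →
        ((e (τ ((i : ℕ) : Fin N)) : A) : V) ≠ ((e (τ ((j : ℕ) : Fin N)) : A) : V) := by
      intro i j hi hj hij h
      exact hij ((fin_cast_inj hi hj).1 (τinj (g0inj _ _ h)))
    have hadj : ∀ i j : ℕ, i < N → j < N →
        (G.Adj ((e (τ ((i : ℕ) : Fin N)) : A) : V) ((e (τ ((j : ℕ) : Fin N)) : A) : V) ↔
          ¬(i = j ∨ i + 1 = j ∨ j + 1 = i ∨ (i + 1 = N ∧ j = 0) ∨ (j + 1 = N ∧ i = 0))) := by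
      intro i j hi hj
      rw [g0adj]
      have e1 : (τ ((i : ℕ) : Fin N) ≠ τ ((j : ℕ) : Fin N)) ↔ ¬(i = j) := by
        constructor
        · intro h hij
          exact h (by rw [hij])
        · intro h ht
          exact h ((fin_cast_inj hi hj).1 (τinj ht))
      rcases hd with hdl | hdl
      · have e2 : (τ ((i:ℕ) : Fin N) - τ ((j:ℕ) : Fin N) = 1) ↔
            (i = j + 1 ∨ (j + 1 = N ∧ i = 0)) := by
          rw [hdl]; exact fin_sub_one hi hj
        have e3 : (τ ((j:ℕ) : Fin N) - τ ((i:ℕ) : Fin N) = 1) ↔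
            (j = i + 1 ∨ (i + 1 = N ∧ j = 0)) := by
          rw [hdl]; exact fin_sub_one hj hi
        rw [e1, e2, e3]
        omega
      · have e2 : (τ ((i:ℕ) : Fin N) - τ ((j:ℕ) : Fin N) = 1) ↔
            (j = i + 1 ∨ (i + 1 = N ∧ j = 0)) := by
          rw [hdl]; exact fin_sub_one hj hi
        have e3 : (τ ((j:ℕ) : Fin N) - τ ((i:ℕ) : Fin N) = 1) ↔
            (i = j + 1 ∨ (j + 1 = N ∧ i = 0)) := by
          rw [hdl]; exact fin_sub_one hi hj
        rw [e1, e2, e3]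
        omega
    have hg0 : ((e (τ (((0:ℕ) : ℕ) : Fin N)) : A) : V) = a := by
      rw [Nat.cast_zero, τ0, hpa]
    have hg1 : ((e (τ (((1:ℕ) : ℕ) : Fin N)) : A) : V) = b := by
      rw [Nat.cast_one, τ1, hpb]
    intro x hx hux
    obtain ⟨w, hw⟩ := τsurj (e.symm ⟨x, hx⟩)
    have hgw : ((e (τ ((w.val : ℕ) : Fin N)) : A) : V) = x := by
      rw [Fin.cast_val_eq_self, hw]
      simp
    exact key_lemma G hbf (by omega : 7 ≤ N)
      (fun i => ((e (τ ((i : ℕ) : Fin N)) : A) : V)) hinj hadj u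
      (by show u ≠ ((e (τ (((0:ℕ) : ℕ) : Fin N)) : A) : V); rw [hg0]; exact hua)
      (by show u ≠ ((e (τ (((1:ℕ) : ℕ) : Fin N)) : A) : V); rw [hg1]; exact hub)
      (by show ¬ G.Adj u ((e (τ (((0:ℕ) : ℕ) : Fin N)) : A) : V); rw [hg0]; exact hnua)
      (by show ¬ G.Adj u ((e (τ (((1:ℕ) : ℕ) : Fin N)) : A) : V); rw [hg1]; exact hnub)
      w.val w.isLt
      (by show G.Adj u ((e (τ ((w.val : ℕ) : Fin N)) : A) : V); rw [hgw]; exact hux)
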